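/- Let N be odd and let H be a linear operator on the (finite-dimensional) space H_N that commutes with both Π^x and Π^z. Then every eigenspace of H has even dimension; in particular, if H is Hermitian, its ground state (lowest eigenvalue) is at least two-fold degenerate. -/

import Mathlib

open Complex BigOperators Finset

namespace SpinChain

/-- Spin configurations on `N` sites (sites mod `N`): `true` = +1, `false` = −1. -/
abbrev Config (N : ℕ) := ZMod N → Bool

/-- The Hilbert space `H_N`: complex functions on spin configurations. -/
abbrev HS (N : ℕ) := Config N → ℂ

/-- The ±1 value of a spin. -/
def sgn (b : Bool) : ℂ := if b then 1 else -1

/-- Standard basis vector `e_s`. -/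
def basis (N : ℕ) [NeZero N] (s : Config N) : HS N := fun t => if t = s then 1 else 0

/-- Inner product `⟨f|g⟩ = ∑_s conj (f s) * g s` (antilinear in the first argument). -/
noncomputable def braket (N : ℕ) [NeZero N] (f g : HS N) : ℂ :=
  ∑ s, (starRingEnd ℂ) (f s) * g s

/-- Flip the spin at site `j`. -/
def flipAt (N : ℕ) (j : ZMod N) (s : Config N) : Config N :=
  Function.update s j (!(s j))

/-- Pauli operator σ^x_j : acts diagonally, `σ^x_j e_s = s(j) e_s`. -/
def sigmaX (N : ℕ) (j : ZMod N) : Module.End ℂ (HS N) where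
  toFun f := fun s => sgn (s j) * f s
  map_add' f g := by funext s; simp [mul_add]
  map_smul' c f := by funext s; simp [smul_eq_mul]; ring

/-- Pauli operator σ^z_j : flips the spin at site `j`, `σ^z_j e_s = e_{s'}`. -/
def sigmaZ (N : ℕ) (j : ZMod N) : Module.End ℂ (HS N) where
  toFun f := fun s => f (flipAt N j s)
  map_add' _ _ := rfl
  map_smul' _ _ := rfl

/-- Pauli operator σ^y_j = i σ^x_j σ^z_j. -/
noncomputable def sigmaY (N : ℕ) (j : ZMod N) : Module.End ℂ (HS N) :=
  Complex.I • (sigmaX N j * sigmaZ N j)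

/-- Kinds of single-site operators: the identity and the three Pauli matrices. -/
inductive PKind | id | x | y | z
  deriving DecidableEq

/-- Single-site operator of a given kind at site `j`. -/
noncomputable def pauli (N : ℕ) : PKind → ZMod N → Module.End ℂ (HS N)
  | PKind.id => fun _ => 1
  | PKind.x => sigmaX N
  | PKind.y => sigmaY N
  | PKind.z => sigmaZ N

/-- Parity operator Π^α = σ^α_1 σ^α_2 ⋯ σ^α_N. -/
noncomputable def parity (N : ℕ) (α : PKind) : Module.End ℂ (HS N) :=
  ((List.range N).map (fun j => pauli N α ((j + 1 : ℕ) : ZMod N))).prod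

/-- The configuration of the kink state |j⟩: `s(j+r) = (−1)^{r+1}` for `r = 1,…,N`
(the single ferromagnetic bond is between sites `j` and `j+1`). -/
def kinkConfig (N : ℕ) (j : ZMod N) : Config N :=
  fun k => ((k - j).val == 0) || ((k - j).val % 2 == 1)

/-- Kink state |j⟩. -/
def kink (N : ℕ) [NeZero N] (j : ZMod N) : HS N := basis N (kinkConfig N j)

/-- Momentum state `|s_p⟩ = N^{-1/2} ∑_{j=1}^N e^{i p j} |j⟩`. -/
noncomputable def momState (N : ℕ) [NeZero N] (p : ℝ) : HS N :=
  (Real.sqrt N : ℂ)⁻¹ • ∑ j ∈ Finset.range N,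
    Complex.exp (Complex.I * p * ((j : ℂ) + 1)) • kink N ((j + 1 : ℕ) : ZMod N)


lemma sigmaX_list_prod (N : ℕ) (L : List (ZMod N)) (f : HS N) (s : Config N) :
    ((L.map (sigmaX N)).prod f) s = (L.map (fun j => sgn (s j))).prod * f s := by
  induction L with
  | nil => simp
  | cons a L ih =>
      simp only [List.map_cons, List.prod_cons, Module.End.mul_apply]
      show sgn (s a) * (((L.map (sigmaX N)).prod f) s) = _
      rw [ih]; ring

lemma sigmaZ_list_prod (N : ℕ) (L : List (ZMod N)) (hL : L.Nodup) (f : HS N) (s : Config N) :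
    ((L.map (sigmaZ N)).prod f) s = f (fun k => if k ∈ L then !(s k) else s k) := by
  induction L generalizing s with
  | nil => simp
  | cons a L ih =>
      simp only [List.map_cons, List.prod_cons, Module.End.mul_apply]
      show ((L.map (sigmaZ N)).prod f) (flipAt N a s) = _
      rw [ih hL.of_cons]
      congr 1
      funext k
      by_cases hk : k = a
      · subst hk
        have : k ∉ L := (List.nodup_cons.mp hL).1
        simp [this, flipAt]
      · simp [flipAt, Function.update_of_ne hk, List.mem_cons, hk]

/-- the list of sites used by `parity`. -/
def siteList (N : ℕ) : List (ZMod N) :=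
  (List.range N).map (fun j => ((j + 1 : ℕ) : ZMod N))

lemma siteList_nodup (N : ℕ) [NeZero N] : (siteList N).Nodup := by
  refine (List.nodup_range : (List.range N).Nodup).map_on ?_
  intro a ha b hb hab
  rw [List.mem_range] at ha hb
  have h2 : ((a : ℕ) : ZMod N) = ((b : ℕ) : ZMod N) := by
    have h3 : (a : ZMod N) + 1 = (b : ZMod N) + 1 := by push_cast at hab; exact hab
    exact add_right_cancel h3
  calc a = ((a : ℕ) : ZMod N).val := (ZMod.val_natCast_of_lt ha).symm
    _ = ((b : ℕ) : ZMod N).val := by rw [h2]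
    _ = b := ZMod.val_natCast_of_lt hb

lemma mem_siteList (N : ℕ) [NeZero N] (k : ZMod N) : k ∈ siteList N := by
  refine List.mem_map.mpr ⟨(k - 1).val, List.mem_range.mpr (ZMod.val_lt _), ?_⟩
  push_cast [ZMod.natCast_val, ZMod.cast_id]
  ring

lemma siteList_length (N : ℕ) : (siteList N).length = N := by
  simp [siteList]

/-- the "total sign" of a configuration. -/
noncomputable def cfun (N : ℕ) (s : Config N) : ℂ :=
  ((siteList N).map (fun j => sgn (s j))).prod

def flipAll (N : ℕ) (s : Config N) : Config N := fun k => !(s k)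

lemma sgn_mul_self (b : Bool) : sgn b * sgn b = 1 := by cases b <;> simp [sgn]

lemma cfun_mul_self (N : ℕ) (s : Config N) : cfun N s * cfun N s = 1 := by
  unfold cfun
  induction siteList N with
  | nil => simp
  | cons a L ih =>
      simp only [List.map_cons, List.prod_cons]
      calc sgn (s a) * (L.map fun j => sgn (s j)).prod *
            (sgn (s a) * (L.map fun j => sgn (s j)).prod)
          = (sgn (s a) * sgn (s a)) *
            ((L.map fun j => sgn (s j)).prod * (L.map fun j => sgn (s j)).prod) := by ring
        _ = 1 := by rw [sgn_mul_self, ih, one_mul]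

lemma sgn_not (b : Bool) : sgn (!b) = -sgn b := by cases b <;> simp [sgn]

lemma cfun_flipAll (N : ℕ) (hN : Odd N) (s : Config N) :
    cfun N (flipAll N s) = -cfun N s := by
  unfold cfun
  have : ∀ L : List (ZMod N),
      (L.map fun j => sgn (flipAll N s j)).prod = (-1) ^ L.length * (L.map fun j => sgn (s j)).prod := by
    intro L
    induction L with
    | nil => simp
    | cons a L ih =>
        simp only [List.map_cons, List.prod_cons, List.length_cons]
        rw [ih, show sgn (flipAll N s a) = -(sgn (s a)) from sgn_not (s a)]
        ring
  rw [this, siteList_length, hN.neg_one_pow]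
  ring

lemma parityX_apply (N : ℕ) (f : HS N) (s : Config N) :
    (parity N PKind.x) f s = cfun N s * f s := by
  have : parity N PKind.x = ((siteList N).map (sigmaX N)).prod := by
    unfold parity siteList pauli
    rw [List.map_map]
    rfl
  rw [this, sigmaX_list_prod]
  rfl

lemma parityZ_apply (N : ℕ) [NeZero N] (f : HS N) (s : Config N) :
    (parity N PKind.z) f s = f (flipAll N s) := by
  have : parity N PKind.z = ((siteList N).map (sigmaZ N)).prod := by
    unfold parity siteList pauli
    rw [List.map_map]
    rfl
  rw [this, sigmaZ_list_prod N _ (siteList_nodup N)]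
  congr 1
  funext k
  simp [mem_siteList, flipAll]

lemma parityX_sq (N : ℕ) : parity N PKind.x * parity N PKind.x = 1 := by
  refine LinearMap.ext fun f => funext fun s => ?_
  show (parity N PKind.x) ((parity N PKind.x) f) s = f s
  rw [parityX_apply, parityX_apply, ← mul_assoc, cfun_mul_self, one_mul]

lemma parityZ_sq (N : ℕ) [NeZero N] : parity N PKind.z * parity N PKind.z = 1 := by
  refine LinearMap.ext fun f => funext fun s => ?_
  show (parity N PKind.z) ((parity N PKind.z) f) s = f s
  rw [parityZ_apply, parityZ_apply]
  congr 1
  funext k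
  simp [flipAll]

lemma parity_anticomm (N : ℕ) [NeZero N] (hN : Odd N) :
    parity N PKind.x * parity N PKind.z = -(parity N PKind.z * parity N PKind.x) := by
  refine LinearMap.ext fun f => funext fun s => ?_
  show (parity N PKind.x) ((parity N PKind.z) f) s =
    -(((parity N PKind.z) ((parity N PKind.x) f)) s)
  rw [parityX_apply, parityZ_apply, parityZ_apply, parityX_apply, cfun_flipAll N hN]
  ring

/-- Abstract lemma: two anticommuting involutions force even dimension. -/
lemma even_finrank_of_anticomm {V : Type*} [AddCommGroup V] [Module ℂ V]
    [FiniteDimensional ℂ V] (A B : Module.End ℂ V)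
    (hA : A * A = 1) (hB : B * B = 1) (hAB : A * B = -(B * A)) :
    Even (Module.finrank ℂ V) := by
  set P : Module.End ℂ V := (2⁻¹ : ℂ) • (1 + B) with hP
  have hPapp : ∀ x : V, P x = (2⁻¹ : ℂ) • (x + B x) := by
    intro x
    simp [hP, LinearMap.smul_apply, LinearMap.add_apply, Module.End.one_apply]
  have hmemK : ∀ x : V, x ∈ LinearMap.ker P ↔ B x = -x := by
    intro x
    rw [LinearMap.mem_ker, hPapp]
    constructor
    · intro h
      have h2 : x + B x = 0 := by
        rcases smul_eq_zero.mp h with h' | h'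
        · exact absurd h' (by norm_num)
        · exact h'
      exact eq_neg_of_add_eq_zero_right h2
    · intro h
      rw [h]
      simp
  have hmemR : ∀ x : V, x ∈ LinearMap.range P ↔ B x = x := by
    intro x
    constructor
    · rintro ⟨y, rfl⟩
      have : B (P y) = (B * P) y := rfl
      rw [this]
      have hBP : B * P = P := by
        simp only [hP, mul_smul_comm, mul_add, mul_one, hB]
        rw [add_comm]
      rw [hBP]
    · intro h
      refine ⟨x, ?_⟩
      rw [hPapp, h, ← two_smul ℂ x, smul_smul]
      norm_num
  have hmapsRK : ∀ x ∈ LinearMap.range P, A x ∈ LinearMap.ker P := by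
    intro x hx
    rw [hmemR] at hx
    rw [hmemK]
    have : B (A x) = (B * A) x := rfl
    rw [this, ← neg_neg (B * A), ← hAB]
    simp only [LinearMap.neg_apply, Module.End.mul_apply, hx]
  have hmapsKR : ∀ x ∈ LinearMap.ker P, A x ∈ LinearMap.range P := by
    intro x hx
    rw [hmemK] at hx
    rw [hmemR]
    have : B (A x) = (B * A) x := rfl
    rw [this, ← neg_neg (B * A), ← hAB]
    simp only [LinearMap.neg_apply, Module.End.mul_apply, hx, map_neg, neg_neg]
  have hAA : ∀ x : V, A (A x) = x := by
    intro x
    have : A (A x) = (A * A) x := rfl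
    rw [this, hA, Module.End.one_apply]
  let e : LinearMap.range P ≃ₗ[ℂ] LinearMap.ker P :=
    LinearEquiv.ofLinear (A.restrict hmapsRK) (A.restrict hmapsKR)
      (by ext x; exact hAA x) (by ext x; exact hAA x)
  have h1 : Module.finrank ℂ (LinearMap.range P) = Module.finrank ℂ (LinearMap.ker P) :=
    e.finrank_eq
  have h2 := LinearMap.finrank_range_add_finrank_ker P
  exact ⟨Module.finrank ℂ (LinearMap.ker P), by omega⟩

/-- If `H` commutes with `Π^x` and `Π^z` (for `N` odd), every eigenspace of `H`
has even dimension; in particular, if `H` is Hermitian its lowest eigenvalue is at least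
two-fold degenerate. -/
theorem statement_9 (N : ℕ) [NeZero N] (hN : Odd N)
    (H : Module.End ℂ (HS N))
    (hx : H * parity N PKind.x = parity N PKind.x * H)
    (hz : H * parity N PKind.z = parity N PKind.z * H) :
    (∀ μ : ℂ, Even (Module.finrank ℂ (Module.End.eigenspace H μ))) ∧
    ((∀ f g : HS N, braket N (H f) g = braket N f (H g)) →
      ∀ μ : ℂ, Module.End.HasEigenvalue H μ →
        (∀ μ' : ℂ, Module.End.HasEigenvalue H μ' → μ.re ≤ μ'.re) →
        2 ≤ Module.finrank ℂ (Module.End.eigenspace H μ)) := by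
  have key : ∀ μ : ℂ, Even (Module.finrank ℂ (Module.End.eigenspace H μ)) := by
    intro μ
    set E := Module.End.eigenspace H μ with hE
    have hmaps : ∀ (P : Module.End ℂ (HS N)), H * P = P * H → ∀ x ∈ E, P x ∈ E := by
      intro P hcomm x hx'
      rw [hE, Module.End.mem_eigenspace_iff] at hx' ⊢
      have : H (P x) = (H * P) x := rfl
      rw [this, hcomm, Module.End.mul_apply, hx', map_smul]
    set A := (parity N PKind.x).restrict (hmaps _ hx) with hA
    set B := (parity N PKind.z).restrict (hmaps _ hz) with hB
    refine even_finrank_of_anticomm A B ?_ ?_ ?_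
    · refine LinearMap.ext fun x => Subtype.ext ?_
      show (parity N PKind.x) ((parity N PKind.x) x) = (x : HS N)
      have : (parity N PKind.x) ((parity N PKind.x) (x : HS N)) =
          (parity N PKind.x * parity N PKind.x) (x : HS N) := rfl
      rw [this, parityX_sq, Module.End.one_apply]
    · refine LinearMap.ext fun x => Subtype.ext ?_
      show (parity N PKind.z) ((parity N PKind.z) x) = (x : HS N)
      have : (parity N PKind.z) ((parity N PKind.z) (x : HS N)) =
          (parity N PKind.z * parity N PKind.z) (x : HS N) := rfl
      rw [this, parityZ_sq, Module.End.one_apply]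
    · refine LinearMap.ext fun x => Subtype.ext ?_
      show (parity N PKind.x) ((parity N PKind.z) (x : HS N)) =
        -((parity N PKind.z) ((parity N PKind.x) (x : HS N)))
      have h := congrArg (fun (T : Module.End ℂ (HS N)) => T (x : HS N)) (parity_anticomm N hN)
      exact h
  refine ⟨key, ?_⟩
  intro _ μ hμ _
  have hpos : 0 < Module.finrank ℂ (Module.End.eigenspace H μ) := by
    rw [Module.End.hasEigenvalue_iff] at hμ
    have : Nontrivial (Module.End.eigenspace H μ) := Submodule.nontrivial_iff_ne_bot.mpr hμ
    exact Module.finrank_pos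
  obtain ⟨k, hk⟩ := key μ
  omega



end SpinChain
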